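/- arXiv:math/9809008 — 4 statements merged into one kernel-verified Lean document; each statement's English description precedes it below -/
import Mathlib

section
/- Let p, q, r ≥ 2 be integers and let G be the Gram matrix of the T_{p,q,r} lattice, a square integer matrix of size p+q+r−2. Then det G = (−1)^{p+q+r−1} · (pqr − pq − pr − qr). (In particular the discriminant of T_{p,q,r} is, up to sign, pqr − pq − pr − qr.) -/
/-- Adjacency along a path (leg): consecutive vertices are adjacent. -/
def legAdj {m : ℕ} (i j : Fin m) : Bool :=
  (i.val + 1 == j.val) || (j.val + 1 == i.val)

/-- The vertex set of the `T_{p,q,r}` graph: a central vertex (`none`) together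
with three legs of `p-1`, `q-1`, `r-1` further vertices. -/
abbrev TVertex (p q r : ℕ) := Option (Fin (p - 1) ⊕ (Fin (q - 1) ⊕ Fin (r - 1)))

/-- Adjacency in the `T_{p,q,r}` graph: the central vertex is adjacent to the first
vertex of each leg, and consecutive vertices of a leg are adjacent. -/
def TAdj {p q r : ℕ} : TVertex p q r → TVertex p q r → Bool
  | none, some (Sum.inl i) => i.val == 0
  | none, some (Sum.inr (Sum.inl i)) => i.val == 0
  | none, some (Sum.inr (Sum.inr i)) => i.val == 0
  | some (Sum.inl i), none => i.val == 0
  | some (Sum.inr (Sum.inl i)), none => i.val == 0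
  | some (Sum.inr (Sum.inr i)), none => i.val == 0
  | some (Sum.inl i), some (Sum.inl j) => legAdj i j
  | some (Sum.inr (Sum.inl i)), some (Sum.inr (Sum.inl j)) => legAdj i j
  | some (Sum.inr (Sum.inr i)), some (Sum.inr (Sum.inr j)) => legAdj i j
  | _, _ => false

/-- The Gram matrix of the `T_{p,q,r}` lattice: every vertex is labelled `-2`
(diagonal entries), with off-diagonal entry `1` for adjacent vertices and `0`
otherwise.  Its size is `p + q + r - 2`. -/
def TGram (p q r : ℕ) : Matrix (TVertex p q r) (TVertex p q r) ℤ :=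
  Matrix.of fun v w => if v = w then -2 else if TAdj v w then 1 else 0

def pathM (n : ℕ) : Matrix (Fin n) (Fin n) ℚ :=
  Matrix.of fun i j => if i = j then -2 else if legAdj i j then 1 else 0

lemma pathM_det_rec (n : ℕ) :
    (pathM (n+2)).det = -2 * (pathM (n+1)).det - (pathM n).det := by
  rw [Matrix.det_succ_row_zero, Fin.sum_univ_succ, Fin.sum_univ_succ]
  have h0 : (pathM (n+2)) 0 0 = -2 := by simp [pathM]
  have h1 : (pathM (n+2)) 0 ((0 : Fin (n+1)).succ) = 1 := by
    simp [pathM, legAdj, Fin.ext_iff]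
  have hz : ∀ j : Fin n, (pathM (n+2)) 0 j.succ.succ = 0 := by
    intro j
    simp [pathM, legAdj, Fin.ext_iff]
  rw [h0, h1]
  have hsz : ∀ j : Fin n, ((-1 : ℚ)^(j.succ.succ : ℕ)) * (pathM (n+2)) 0 j.succ.succ *
      ((pathM (n+2)).submatrix Fin.succ j.succ.succ.succAbove).det = 0 := by
    intro j; rw [hz]; ring
  rw [Finset.sum_congr rfl (fun j _ => hsz j), Finset.sum_const, smul_zero]
  have hA : ((pathM (n+2)).submatrix Fin.succ ((0 : Fin (n+2)).succAbove)) = pathM (n+1) := by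
    ext i j
    simp [pathM, legAdj, Fin.ext_iff]
  have hB : ((pathM (n+2)).submatrix Fin.succ ((0 : Fin (n+1)).succ.succAbove)).det
      = (pathM n).det := by
    set B := (pathM (n+2)).submatrix Fin.succ ((0 : Fin (n+1)).succ.succAbove) with hBdef
    rw [Matrix.det_succ_column_zero, Fin.sum_univ_succ]
    have hB00 : B 0 0 = 1 := by
      simp [hBdef, pathM, legAdj, Fin.succAbove, Fin.ext_iff, Fin.lt_iff_val_lt_val]
    have hcol : ((0 : Fin (n+1)).succ.succAbove (0 : Fin (n+1))) = 0 := by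
      simp [Fin.succAbove, Fin.lt_iff_val_lt_val, Fin.ext_iff]
    have hBi0 : ∀ i : Fin n, B i.succ 0 = 0 := by
      intro i
      rw [hBdef, Matrix.submatrix_apply, hcol]
      simp [pathM, legAdj, Fin.ext_iff, Fin.val_succ]
    have hsub : (B.submatrix ((0:Fin (n+1)).succAbove) Fin.succ) = pathM n := by
      ext i j
      have : ((0 : Fin (n+1)).succ.succAbove j.succ) = j.succ.succ := by
        simp [Fin.succAbove, Fin.lt_iff_val_lt_val, Fin.ext_iff]
      simp only [hBdef, Matrix.submatrix_apply, Fin.succAbove_zero, this]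
      simp [pathM, legAdj, Fin.ext_iff]
    have hzs : ∀ i : Fin n, ((-1:ℚ)^((i.succ : Fin (n+1)) : ℕ)) * B i.succ 0 *
        (B.submatrix i.succ.succAbove Fin.succ).det = 0 := by
      intro i; rw [hBi0]; ring
    rw [Finset.sum_congr rfl (fun i _ => hzs i), Finset.sum_const, smul_zero, hB00, hsub]
    simp
  rw [hA, hB]
  simp only [Fin.val_zero, Fin.val_succ, pow_zero, pow_one, Nat.zero_add]
  ring

lemma pathM_det (n : ℕ) : (pathM n).det = (-1)^n * (n+1) := by
  induction n using Nat.twoStepInduction with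
  | zero => simp [Matrix.det_isEmpty]
  | one => rw [Matrix.det_fin_one]; norm_num [pathM]
  | more n ih1 ih2 =>
    rw [pathM_det_rec, ih1, ih2]
    push_cast
    ring

/-- The solution vector for the path system. -/
noncomputable def pv (n : ℕ) (j : Fin n) : ℚ := ((j : ℚ) - n) / (n + 1)

lemma pathM_mulVec (n : ℕ) (i : Fin n) :
    ∑ j, pathM n i j * pv n j = if (i : ℕ) = 0 then 1 else 0 := by
  have hN : ((n : ℚ) + 1) ≠ 0 := by positivity
  have hsplit : ∀ j : Fin n, pathM n i j =
      (if i = j then (-2:ℚ) else 0) + (if (i:ℕ)+1 = (j:ℕ) then 1 else 0)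
        + (if (j:ℕ)+1 = (i:ℕ) then 1 else 0) := by
    intro j
    simp only [pathM, Matrix.of_apply, legAdj, Bool.or_eq_true, beq_iff_eq, Fin.ext_iff]
    split_ifs <;> simp_all <;> omega
  rw [Finset.sum_congr rfl (fun j _ => by rw [hsplit j, add_mul, add_mul]),
    Finset.sum_add_distrib, Finset.sum_add_distrib]
  have e1 : ∑ j : Fin n, (if i = j then (-2:ℚ) else 0) * pv n j = -2 * pv n i := by
    have : ∀ j : Fin n, (if i = j then (-2:ℚ) else 0) * pv n j
        = if i = j then -2 * pv n j else 0 := fun j => by split_ifs <;> ring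
    rw [Finset.sum_congr rfl (fun j _ => this j), Finset.sum_ite_eq]
    simp
  have e2 : ∑ j : Fin n, (if (i:ℕ)+1 = (j:ℕ) then (1:ℚ) else 0) * pv n j
      = ((i:ℚ) + 1 - n) / (n + 1) := by
    by_cases h : (i:ℕ)+1 < n
    · have : ∀ j : Fin n, (if (i:ℕ)+1 = (j:ℕ) then (1:ℚ) else 0) * pv n j
          = if (⟨(i:ℕ)+1, h⟩ : Fin n) = j then pv n j else 0 := by
        intro j
        simp only [Fin.ext_iff]
        split_ifs <;> simp_all
      rw [Finset.sum_congr rfl (fun j _ => this j), Finset.sum_ite_eq]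
      simp [pv]
    · have hn : (i:ℕ)+1 = n := by omega
      have : ∀ j : Fin n, (if (i:ℕ)+1 = (j:ℕ) then (1:ℚ) else 0) * pv n j = 0 := by
        intro j
        have := j.isLt
        rw [if_neg (by omega), zero_mul]
      rw [Finset.sum_congr rfl (fun j _ => this j), Finset.sum_const, smul_zero]
      have hc : ((i:ℕ):ℚ) + 1 = (n:ℚ) := by exact_mod_cast hn
      rw [hc]
      simp
  rw [e1, e2]
  by_cases h0 : (i:ℕ) = 0
  · have e3 : ∑ j : Fin n, (if (j:ℕ)+1 = (i:ℕ) then (1:ℚ) else 0) * pv n j = 0 := by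
      have : ∀ j : Fin n, (if (j:ℕ)+1 = (i:ℕ) then (1:ℚ) else 0) * pv n j = 0 := by
        intro j; rw [if_neg (by omega), zero_mul]
      rw [Finset.sum_congr rfl (fun j _ => this j), Finset.sum_const, smul_zero]
    rw [e3, if_pos h0]
    have : ((i:ℚ)) = 0 := by exact_mod_cast h0
    rw [pv, this]
    field_simp
    ring
  · have hi1 : 1 ≤ (i:ℕ) := by omega
    have hlt : (i:ℕ) - 1 < n := by have := i.isLt; omega
    have e3 : ∑ j : Fin n, (if (j:ℕ)+1 = (i:ℕ) then (1:ℚ) else 0) * pv n j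
        = ((i:ℚ) - 1 - n) / (n + 1) := by
      have : ∀ j : Fin n, (if (j:ℕ)+1 = (i:ℕ) then (1:ℚ) else 0) * pv n j
          = if (⟨(i:ℕ)-1, hlt⟩ : Fin n) = j then pv n j else 0 := by
        intro j
        simp only [Fin.ext_iff]
        split_ifs <;> simp_all <;> omega
      rw [Finset.sum_congr rfl (fun j _ => this j), Finset.sum_ite_eq]
      have : ((((i:ℕ) - 1 : ℕ)) : ℚ) = (i:ℚ) - 1 := by
        push_cast [hi1]
        ring
      simp [pv, this]
    rw [e3, if_neg h0, pv]
    field_simp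
    ring

section Assembly

abbrev TLegIdx (a b c : ℕ) := Fin a ⊕ (Fin b ⊕ Fin c)

def TDmat (a b c : ℕ) : Matrix (TLegIdx a b c) (TLegIdx a b c) ℚ :=
  Matrix.fromBlocks (pathM a) 0 0 (Matrix.fromBlocks (pathM b) 0 0 (pathM c))

def Tfirst {a b c : ℕ} : TLegIdx a b c → ℚ
  | Sum.inl i => if (i:ℕ) = 0 then 1 else 0
  | Sum.inr (Sum.inl i) => if (i:ℕ) = 0 then 1 else 0
  | Sum.inr (Sum.inr i) => if (i:ℕ) = 0 then 1 else 0

def tEquiv (a b c : ℕ) : TLegIdx a b c ⊕ Unit ≃ Option (TLegIdx a b c) where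
  toFun := fun v => match v with | Sum.inl x => some x | Sum.inr _ => none
  invFun := fun v => match v with | some x => Sum.inl x | none => Sum.inr ()
  left_inv := by rintro (x | ⟨⟩) <;> rfl
  right_inv := by rintro (_ | x) <;> rfl

@[simp] lemma tEquiv_inl (a b c : ℕ) (x : TLegIdx a b c) :
    tEquiv a b c (Sum.inl x) = some x := rfl

@[simp] lemma tEquiv_inr (a b c : ℕ) (u : Unit) :
    tEquiv a b c (Sum.inr u) = none := rfl

def TcolC (a b c : ℕ) : Matrix (TLegIdx a b c) Unit ℚ := Matrix.of fun v _ => Tfirst v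
def TrowB (a b c : ℕ) : Matrix Unit (TLegIdx a b c) ℚ := Matrix.of fun _ v => Tfirst v

noncomputable def Txsol (a b c : ℕ) : Matrix (TLegIdx a b c) Unit ℚ :=
  Matrix.of fun v _ => match v with
    | Sum.inl i => pv a i
    | Sum.inr (Sum.inl i) => pv b i
    | Sum.inr (Sum.inr i) => pv c i

lemma TDmat_det (a b c : ℕ) :
    (TDmat a b c).det = (-1)^(a+b+c) * ((a+1)*(b+1)*(c+1)) := by
  rw [TDmat, Matrix.det_fromBlocks_zero₂₁, Matrix.det_fromBlocks_zero₂₁,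
    pathM_det, pathM_det, pathM_det]
  rw [pow_add, pow_add]
  ring

lemma TDmat_mul_xsol (a b c : ℕ) :
    TDmat a b c * Txsol a b c = TcolC a b c := by
  ext v u
  rcases v with i | i | i <;>
    simp only [Matrix.mul_apply, Fintype.sum_sum_type, TDmat, Txsol, TcolC, Tfirst,
      Matrix.fromBlocks_apply₁₁, Matrix.fromBlocks_apply₁₂, Matrix.fromBlocks_apply₂₁,
      Matrix.fromBlocks_apply₂₂, Matrix.of_apply, Matrix.zero_apply, zero_mul,
      Finset.sum_const_zero, add_zero, zero_add] <;>
    exact pathM_mulVec _ i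

lemma sum_first_pv (a : ℕ) (ha : 0 < a) :
    ∑ i : Fin a, (if (i:ℕ) = 0 then (1:ℚ) else 0) * pv a i = -(a:ℚ)/(a+1) := by
  have h : ∀ i : Fin a, (if (i:ℕ) = 0 then (1:ℚ) else 0) * pv a i
      = if (⟨0, ha⟩ : Fin a) = i then pv a i else 0 := by
    intro i
    rcases eq_or_ne (i:ℕ) 0 with h | h
    · rw [if_pos h, if_pos (Fin.ext (by simp [h])), one_mul]
    · rw [if_neg h, if_neg (fun hc => h (by simpa [Fin.ext_iff] using hc.symm)), zero_mul]
  rw [Finset.sum_congr rfl (fun i _ => h i), Finset.sum_ite_eq]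
  simp only [Finset.mem_univ, if_true, pv]
  push_cast
  ring

end Assembly

/-- The determinant of the Gram matrix of `T_{p,q,r}` is
`(-1)^(p+q+r-1) * (pqr - pq - pr - qr)`. -/
theorem TGram_det (p q r : ℕ) (hp : 2 ≤ p) (hq : 2 ≤ q) (hr : 2 ≤ r) :
    (TGram p q r).det =
      (-1) ^ (p + q + r - 1) *
        ((p : ℤ) * q * r - (p : ℤ) * q - (p : ℤ) * r - (q : ℤ) * r) := by
  obtain ⟨a, rfl⟩ : ∃ a, p = a + 2 := ⟨p - 2, by omega⟩
  obtain ⟨b, rfl⟩ : ∃ b, q = b + 2 := ⟨q - 2, by omega⟩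
  obtain ⟨c, rfl⟩ : ∃ c, r = c + 2 := ⟨r - 2, by omega⟩
  -- cast to ℚ
  apply Int.cast_injective (α := ℚ)
  rw [show ((TGram (a+2) (b+2) (c+2)).det : ℚ)
      = ((TGram (a+2) (b+2) (c+2)).map ((↑) : ℤ → ℚ)).det from
    RingHom.map_det (Int.castRingHom ℚ) _]
  -- reindex
  rw [← Matrix.det_submatrix_equiv_self (tEquiv (a+1) (b+1) (c+1))]
  have hM : ((TGram (a+2) (b+2) (c+2)).map ((↑) : ℤ → ℚ)).submatrix (tEquiv (a+1) (b+1) (c+1)) (tEquiv (a+1) (b+1) (c+1))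
      = Matrix.fromBlocks (TDmat (a+1) (b+1) (c+1)) (TcolC (a+1) (b+1) (c+1))
          (TrowB (a+1) (b+1) (c+1)) (Matrix.of fun _ _ => (-2 : ℚ)) := by
    ext v w
    rcases v with (i | i | i) | u <;> rcases w with (j | j | j) | u' <;>
      simp [TGram, TAdj, legAdj, pathM, TDmat, TcolC, TrowB, Tfirst, Fin.ext_iff, -Fin.val_eq_zero_iff]
  rw [hM]
  -- Schur complement
  have hdet : (TDmat (a+1) (b+1) (c+1)).det ≠ 0 := by
    rw [TDmat_det]
    positivity
  haveI : Invertible (TDmat (a+1) (b+1) (c+1)) :=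
    Matrix.invertibleOfIsUnitDet _ (isUnit_iff_ne_zero.mpr hdet)
  rw [Matrix.det_fromBlocks₁₁]
  have hx : ⅟(TDmat (a+1) (b+1) (c+1)) * TcolC (a+1) (b+1) (c+1)
      = Txsol (a+1) (b+1) (c+1) := by
    rw [← TDmat_mul_xsol, ← Matrix.mul_assoc, invOf_mul_self, Matrix.one_mul]
  rw [Matrix.mul_assoc, hx]
  have hs : (Matrix.of (fun _ _ => (-2:ℚ)) - TrowB (a+1) (b+1) (c+1) * Txsol (a+1) (b+1) (c+1)).det
      = -2 + ((a:ℚ)+1)/(a+2) + ((b:ℚ)+1)/(b+2) + ((c:ℚ)+1)/(c+2) := by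
    rw [Matrix.det_unique]
    simp only [Matrix.sub_apply, Matrix.of_apply, Matrix.mul_apply, Fintype.sum_sum_type,
      TrowB, Txsol, Tfirst, Matrix.of_apply]
    rw [sum_first_pv _ (Nat.succ_pos a), sum_first_pv _ (Nat.succ_pos b),
      sum_first_pv _ (Nat.succ_pos c)]
    push_cast
    ring
  rw [hs, TDmat_det]
  have h2 : ((a:ℚ)+2) ≠ 0 := by positivity
  have h2b : ((b:ℚ)+2) ≠ 0 := by positivity
  have h2c : ((c:ℚ)+2) ≠ 0 := by positivity
  have hexp : (a+2) + (b+2) + (c+2) - 1 = (a+b+c) + 5 := by omega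
  rw [hexp]
  push_cast
  rw [pow_add]
  field_simp
  ring
end

section
/- Let p, q, r ≥ 2 be integers and let G be the Gram matrix of the T_{p,q,r} lattice. Then G is invertible over ℚ (equivalently, the bilinear form of T_{p,q,r} is nondegenerate) if and only if pqr ≠ pq + pr + qr, i.e. if and only if 1/p + 1/q + 1/r ≠ 1. -/
/-! ### Auxiliary lemmas -/

lemma finSumInd {a : ℕ} (x : Fin a → ℚ) (m : ℕ) :
    (∑ j : Fin a, if (j : ℕ) = m then x j else 0) = if h : m < a then x ⟨m, h⟩ else 0 := by
  split_ifs with h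
  · rw [Finset.sum_eq_single ⟨m, h⟩]
    · simp
    · intro j _ hj
      rw [if_neg]
      exact fun hc => hj (Fin.ext hc)
    · simp
  · apply Finset.sum_eq_zero
    intro j _
    rw [if_neg]
    exact fun hc => h (hc ▸ j.isLt)

abbrev MQ (p q r : ℕ) : Matrix (TVertex p q r) (TVertex p q r) ℚ :=
  (TGram p q r).map ((↑) : ℤ → ℚ)

lemma MQ_apply (p q r : ℕ) (v w : TVertex p q r) :
    MQ p q r v w = if v = w then -2 else if TAdj v w then 1 else 0 := by
  simp only [MQ, TGram, Matrix.map_apply, Matrix.of_apply]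
  rw [apply_ite ((↑) : ℤ → ℚ), apply_ite ((↑) : ℤ → ℚ)]
  norm_num

/-- The extension of `x` restricted to leg A, as a function on `ℕ`:
`0` is the center, `j+1` the `j`-th leg vertex, `0` beyond the end. -/
def yA (p q r : ℕ) (x : TVertex p q r → ℚ) : ℕ → ℚ
  | 0 => x none
  | j+1 => if h : j < p - 1 then x (some (Sum.inl ⟨j, h⟩)) else 0

def yB (p q r : ℕ) (x : TVertex p q r → ℚ) : ℕ → ℚ
  | 0 => x none
  | j+1 => if h : j < q - 1 then x (some (Sum.inr (Sum.inl ⟨j, h⟩))) else 0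

def yC (p q r : ℕ) (x : TVertex p q r → ℚ) : ℕ → ℚ
  | 0 => x none
  | j+1 => if h : j < r - 1 then x (some (Sum.inr (Sum.inr ⟨j, h⟩))) else 0

lemma mulVec_legA (p q r : ℕ) (x : TVertex p q r → ℚ) (k : Fin (p-1)) :
    (MQ p q r).mulVec x (some (Sum.inl k)) =
      yA p q r x k.val - 2 * yA p q r x (k.val+1) + yA p q r x (k.val+2) := by
  have hB : ∀ j : Fin (q-1),
      MQ p q r (some (Sum.inl k)) (some (Sum.inr (Sum.inl j))) * x (some (Sum.inr (Sum.inl j))) = 0 := by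
    intro j
    rw [MQ_apply,
      show TAdj (p := p) (q := q) (r := r) (some (Sum.inl k)) (some (Sum.inr (Sum.inl j))) = false
        from rfl]
    simp
  have hC : ∀ j : Fin (r-1),
      MQ p q r (some (Sum.inl k)) (some (Sum.inr (Sum.inr j))) * x (some (Sum.inr (Sum.inr j))) = 0 := by
    intro j
    rw [MQ_apply,
      show TAdj (p := p) (q := q) (r := r) (some (Sum.inl k)) (some (Sum.inr (Sum.inr j))) = false
        from rfl]
    simp
  have hnone : MQ p q r (some (Sum.inl k)) none * x none
      = if (k : ℕ) = 0 then x none else 0 := by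
    rw [MQ_apply,
      show TAdj (p := p) (q := q) (r := r) (some (Sum.inl k)) none = ((k : ℕ) == 0) from rfl]
    simp [ite_mul]
  have hleg : ∀ j : Fin (p-1),
      MQ p q r (some (Sum.inl k)) (some (Sum.inl j)) * x (some (Sum.inl j)) =
        (if j = k then -2 * x (some (Sum.inl j)) else 0)
        + ((if (j : ℕ) = (k : ℕ) + 1 then x (some (Sum.inl j)) else 0)
          + (if (j : ℕ) + 1 = (k : ℕ) then x (some (Sum.inl j)) else 0)) := by
    intro j
    rw [MQ_apply,
      show TAdj (p := p) (q := q) (r := r) (some (Sum.inl k)) (some (Sum.inl j)) = legAdj k j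
        from rfl]
    simp only [Option.some.injEq, Sum.inl.injEq, legAdj, Bool.or_eq_true, beq_iff_eq, Fin.ext_iff]
    split_ifs <;> first | ring1 | (exfalso; omega)
  rw [Matrix.mulVec, dotProduct]
  simp only [Fintype.sum_option, Fintype.sum_sum_type, hB, hC, Finset.sum_const_zero, add_zero,
    hnone, hleg, Finset.sum_add_distrib]
  rw [Finset.sum_ite_eq' Finset.univ k (fun j => -2 * x (some (Sum.inl j)))]
  rw [show (∑ j : Fin (p-1), if (j : ℕ) = (k : ℕ) + 1 then x (some (Sum.inl j)) else 0)
      = yA p q r x ((k : ℕ) + 2) from finSumInd _ _]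
  have hmid : x (some (Sum.inl k)) = yA p q r x ((k : ℕ) + 1) := by
    simp [yA, k.isLt]
  rcases Nat.eq_zero_or_pos (k : ℕ) with hk | hk
  · have h3 : (∑ j : Fin (p-1), if (j : ℕ) + 1 = (k : ℕ) then x (some (Sum.inl j)) else 0) = 0 := by
      apply Finset.sum_eq_zero
      intro j _
      rw [if_neg (by omega)]
    rw [h3, if_pos hk, hmid, hk]
    rw [show yA p q r x 0 = x none from rfl]
    simp only [Finset.mem_univ, if_true]
    ring
  · obtain ⟨s, hs⟩ : ∃ s, (k : ℕ) = s + 1 := ⟨(k : ℕ) - 1, by omega⟩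
    have h3 : (∑ j : Fin (p-1), if (j : ℕ) + 1 = (k : ℕ) then x (some (Sum.inl j)) else 0)
        = yA p q r x (k : ℕ) := by
      rw [show (∑ j : Fin (p-1), if (j : ℕ) + 1 = (k : ℕ) then x (some (Sum.inl j)) else 0)
          = ∑ j : Fin (p-1), if (j : ℕ) = s then x (some (Sum.inl j)) else 0 from
        Finset.sum_congr rfl (fun j _ => if_congr (by omega) rfl rfl)]
      rw [finSumInd, hs]
      rfl
    rw [h3, if_neg (by omega), hmid]
    simp only [Finset.mem_univ, if_true]
    ring

lemma mulVec_legB (p q r : ℕ) (x : TVertex p q r → ℚ) (k : Fin (q-1)) :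
    (MQ p q r).mulVec x (some (Sum.inr (Sum.inl k))) =
      yB p q r x k.val - 2 * yB p q r x (k.val+1) + yB p q r x (k.val+2) := by
  have hA : ∀ j : Fin (p-1),
      MQ p q r (some (Sum.inr (Sum.inl k))) (some (Sum.inl j)) * x (some (Sum.inl j)) = 0 := by
    intro j
    rw [MQ_apply,
      show TAdj (p := p) (q := q) (r := r) (some (Sum.inr (Sum.inl k))) (some (Sum.inl j)) = false
        from rfl]
    simp
  have hC : ∀ j : Fin (r-1),
      MQ p q r (some (Sum.inr (Sum.inl k))) (some (Sum.inr (Sum.inr j))) * x (some (Sum.inr (Sum.inr j))) = 0 := by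
    intro j
    rw [MQ_apply,
      show TAdj (p := p) (q := q) (r := r) (some (Sum.inr (Sum.inl k))) (some (Sum.inr (Sum.inr j))) = false
        from rfl]
    simp
  have hnone : MQ p q r (some (Sum.inr (Sum.inl k))) none * x none
      = if (k : ℕ) = 0 then x none else 0 := by
    rw [MQ_apply,
      show TAdj (p := p) (q := q) (r := r) (some (Sum.inr (Sum.inl k))) none = ((k : ℕ) == 0) from rfl]
    simp [ite_mul]
  have hleg : ∀ j : Fin (q-1),
      MQ p q r (some (Sum.inr (Sum.inl k))) (some (Sum.inr (Sum.inl j))) * x (some (Sum.inr (Sum.inl j))) =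
        (if j = k then -2 * x (some (Sum.inr (Sum.inl j))) else 0)
        + ((if (j : ℕ) = (k : ℕ) + 1 then x (some (Sum.inr (Sum.inl j))) else 0)
          + (if (j : ℕ) + 1 = (k : ℕ) then x (some (Sum.inr (Sum.inl j))) else 0)) := by
    intro j
    rw [MQ_apply,
      show TAdj (p := p) (q := q) (r := r) (some (Sum.inr (Sum.inl k))) (some (Sum.inr (Sum.inl j))) = legAdj k j
        from rfl]
    simp only [Option.some.injEq, Sum.inr.injEq, Sum.inl.injEq, legAdj, Bool.or_eq_true,
      beq_iff_eq, Fin.ext_iff]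
    split_ifs <;> first | ring1 | (exfalso; omega)
  rw [Matrix.mulVec, dotProduct]
  simp only [Fintype.sum_option, Fintype.sum_sum_type, hA, hC, Finset.sum_const_zero, add_zero,
    zero_add, hnone, hleg, Finset.sum_add_distrib]
  rw [Finset.sum_ite_eq' Finset.univ k (fun j => -2 * x (some (Sum.inr (Sum.inl j))))]
  rw [show (∑ j : Fin (q-1), if (j : ℕ) = (k : ℕ) + 1 then x (some (Sum.inr (Sum.inl j))) else 0)
      = yB p q r x ((k : ℕ) + 2) from finSumInd _ _]
  have hmid : x (some (Sum.inr (Sum.inl k))) = yB p q r x ((k : ℕ) + 1) := by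
    simp [yB, k.isLt]
  rcases Nat.eq_zero_or_pos (k : ℕ) with hk | hk
  · have h3 : (∑ j : Fin (q-1), if (j : ℕ) + 1 = (k : ℕ) then x (some (Sum.inr (Sum.inl j))) else 0) = 0 := by
      apply Finset.sum_eq_zero
      intro j _
      rw [if_neg (by omega)]
    rw [h3, if_pos hk, hmid, hk]
    rw [show yB p q r x 0 = x none from rfl]
    simp only [Finset.mem_univ, if_true]
    ring
  · obtain ⟨s, hs⟩ : ∃ s, (k : ℕ) = s + 1 := ⟨(k : ℕ) - 1, by omega⟩
    have h3 : (∑ j : Fin (q-1), if (j : ℕ) + 1 = (k : ℕ) then x (some (Sum.inr (Sum.inl j))) else 0)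
        = yB p q r x (k : ℕ) := by
      rw [show (∑ j : Fin (q-1), if (j : ℕ) + 1 = (k : ℕ) then x (some (Sum.inr (Sum.inl j))) else 0)
          = ∑ j : Fin (q-1), if (j : ℕ) = s then x (some (Sum.inr (Sum.inl j))) else 0 from
        Finset.sum_congr rfl (fun j _ => if_congr (by omega) rfl rfl)]
      rw [finSumInd, hs]
      rfl
    rw [h3, if_neg (by omega), hmid]
    simp only [Finset.mem_univ, if_true]
    ring

lemma mulVec_legC (p q r : ℕ) (x : TVertex p q r → ℚ) (k : Fin (r-1)) :
    (MQ p q r).mulVec x (some (Sum.inr (Sum.inr k))) =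
      yC p q r x k.val - 2 * yC p q r x (k.val+1) + yC p q r x (k.val+2) := by
  have hA : ∀ j : Fin (p-1),
      MQ p q r (some (Sum.inr (Sum.inr k))) (some (Sum.inl j)) * x (some (Sum.inl j)) = 0 := by
    intro j
    rw [MQ_apply,
      show TAdj (p := p) (q := q) (r := r) (some (Sum.inr (Sum.inr k))) (some (Sum.inl j)) = false
        from rfl]
    simp
  have hB : ∀ j : Fin (q-1),
      MQ p q r (some (Sum.inr (Sum.inr k))) (some (Sum.inr (Sum.inl j))) * x (some (Sum.inr (Sum.inl j))) = 0 := by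
    intro j
    rw [MQ_apply,
      show TAdj (p := p) (q := q) (r := r) (some (Sum.inr (Sum.inr k))) (some (Sum.inr (Sum.inl j))) = false
        from rfl]
    simp
  have hnone : MQ p q r (some (Sum.inr (Sum.inr k))) none * x none
      = if (k : ℕ) = 0 then x none else 0 := by
    rw [MQ_apply,
      show TAdj (p := p) (q := q) (r := r) (some (Sum.inr (Sum.inr k))) none = ((k : ℕ) == 0) from rfl]
    simp [ite_mul]
  have hleg : ∀ j : Fin (r-1),
      MQ p q r (some (Sum.inr (Sum.inr k))) (some (Sum.inr (Sum.inr j))) * x (some (Sum.inr (Sum.inr j))) =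
        (if j = k then -2 * x (some (Sum.inr (Sum.inr j))) else 0)
        + ((if (j : ℕ) = (k : ℕ) + 1 then x (some (Sum.inr (Sum.inr j))) else 0)
          + (if (j : ℕ) + 1 = (k : ℕ) then x (some (Sum.inr (Sum.inr j))) else 0)) := by
    intro j
    rw [MQ_apply,
      show TAdj (p := p) (q := q) (r := r) (some (Sum.inr (Sum.inr k))) (some (Sum.inr (Sum.inr j))) = legAdj k j
        from rfl]
    simp only [Option.some.injEq, Sum.inr.injEq, legAdj, Bool.or_eq_true,
      beq_iff_eq, Fin.ext_iff]
    split_ifs <;> first | ring1 | (exfalso; omega)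
  rw [Matrix.mulVec, dotProduct]
  simp only [Fintype.sum_option, Fintype.sum_sum_type, hA, hB, Finset.sum_const_zero, add_zero,
    zero_add, hnone, hleg, Finset.sum_add_distrib]
  rw [Finset.sum_ite_eq' Finset.univ k (fun j => -2 * x (some (Sum.inr (Sum.inr j))))]
  rw [show (∑ j : Fin (r-1), if (j : ℕ) = (k : ℕ) + 1 then x (some (Sum.inr (Sum.inr j))) else 0)
      = yC p q r x ((k : ℕ) + 2) from finSumInd _ _]
  have hmid : x (some (Sum.inr (Sum.inr k))) = yC p q r x ((k : ℕ) + 1) := by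
    simp [yC, k.isLt]
  rcases Nat.eq_zero_or_pos (k : ℕ) with hk | hk
  · have h3 : (∑ j : Fin (r-1), if (j : ℕ) + 1 = (k : ℕ) then x (some (Sum.inr (Sum.inr j))) else 0) = 0 := by
      apply Finset.sum_eq_zero
      intro j _
      rw [if_neg (by omega)]
    rw [h3, if_pos hk, hmid, hk]
    rw [show yC p q r x 0 = x none from rfl]
    simp only [Finset.mem_univ, if_true]
    ring
  · obtain ⟨s, hs⟩ : ∃ s, (k : ℕ) = s + 1 := ⟨(k : ℕ) - 1, by omega⟩
    have h3 : (∑ j : Fin (r-1), if (j : ℕ) + 1 = (k : ℕ) then x (some (Sum.inr (Sum.inr j))) else 0)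
        = yC p q r x (k : ℕ) := by
      rw [show (∑ j : Fin (r-1), if (j : ℕ) + 1 = (k : ℕ) then x (some (Sum.inr (Sum.inr j))) else 0)
          = ∑ j : Fin (r-1), if (j : ℕ) = s then x (some (Sum.inr (Sum.inr j))) else 0 from
        Finset.sum_congr rfl (fun j _ => if_congr (by omega) rfl rfl)]
      rw [finSumInd, hs]
      rfl
    rw [h3, if_neg (by omega), hmid]
    simp only [Finset.mem_univ, if_true]
    ring

lemma mulVec_none (p q r : ℕ) (x : TVertex p q r → ℚ) :
    (MQ p q r).mulVec x none =
      -2 * x none + (yA p q r x 1 + (yB p q r x 1 + yC p q r x 1)) := by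
  have hA : ∀ j : Fin (p-1),
      MQ p q r none (some (Sum.inl j)) * x (some (Sum.inl j))
        = if (j : ℕ) = 0 then x (some (Sum.inl j)) else 0 := by
    intro j
    rw [MQ_apply,
      show TAdj (p := p) (q := q) (r := r) none (some (Sum.inl j)) = ((j : ℕ) == 0) from rfl]
    simp [ite_mul]
  have hB : ∀ j : Fin (q-1),
      MQ p q r none (some (Sum.inr (Sum.inl j))) * x (some (Sum.inr (Sum.inl j)))
        = if (j : ℕ) = 0 then x (some (Sum.inr (Sum.inl j))) else 0 := by
    intro j
    rw [MQ_apply,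
      show TAdj (p := p) (q := q) (r := r) none (some (Sum.inr (Sum.inl j))) = ((j : ℕ) == 0) from rfl]
    simp [ite_mul]
  have hC : ∀ j : Fin (r-1),
      MQ p q r none (some (Sum.inr (Sum.inr j))) * x (some (Sum.inr (Sum.inr j)))
        = if (j : ℕ) = 0 then x (some (Sum.inr (Sum.inr j))) else 0 := by
    intro j
    rw [MQ_apply,
      show TAdj (p := p) (q := q) (r := r) none (some (Sum.inr (Sum.inr j))) = ((j : ℕ) == 0) from rfl]
    simp [ite_mul]
  have hdiag : MQ p q r none none * x none = -2 * x none := by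
    rw [MQ_apply]
    simp
  rw [Matrix.mulVec, dotProduct]
  simp only [Fintype.sum_option, Fintype.sum_sum_type, hA, hB, hC, hdiag]
  rw [finSumInd, finSumInd, finSumInd]
  rfl

lemma leg_lin (a : ℕ) (y : ℕ → ℚ) (h0 : y (a+1) = 0)
    (hrec : ∀ k, k < a → y k - 2 * y (k+1) + y (k+2) = 0) :
    ∀ j, j ≤ a + 1 → y (a+1-j) = (j : ℚ) * y a := by
  intro j
  induction j using Nat.strong_induction_on with
  | _ j ih =>
    match j with
    | 0 => intro _; simpa using h0
    | 1 => intro _; simp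
    | (j+2) =>
      intro hj
      have h1 := ih (j+1) (by omega) (by omega)
      have h2 := ih j (by omega) (by omega)
      have hr := hrec (a-1-j) (by omega)
      rw [show a-1-j+2 = a+1-j by omega, show a-1-j+1 = a+1-(j+1) by omega,
        show a-1-j = a+1-(j+2) by omega] at hr
      rw [h1, h2] at hr
      push_cast
      push_cast at hr
      linarith

/-- The Gram matrix of `T_{p,q,r}` is invertible over `ℚ` (the bilinear form is
nondegenerate) if and only if `pqr ≠ pq + pr + qr`, i.e. `1/p + 1/q + 1/r ≠ 1`. -/
theorem TGram_nondegenerate_iff (p q r : ℕ) (hp : 2 ≤ p) (hq : 2 ≤ q) (hr : 2 ≤ r) :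
    IsUnit ((TGram p q r).map ((↑) : ℤ → ℚ)) ↔
      (p : ℚ) * q * r ≠ (p : ℚ) * q + (p : ℚ) * r + (q : ℚ) * r := by
  have hp0 : (p : ℚ) ≠ 0 := Nat.cast_ne_zero.mpr (by omega)
  have hq0 : (q : ℚ) ≠ 0 := Nat.cast_ne_zero.mpr (by omega)
  have hr0 : (r : ℚ) ≠ 0 := Nat.cast_ne_zero.mpr (by omega)
  rw [Matrix.isUnit_iff_isUnit_det, isUnit_iff_ne_zero, ← not_iff_not, not_ne_iff, not_ne_iff,
    ← Matrix.exists_mulVec_eq_zero_iff]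
  constructor
  · rintro ⟨v, hv, hker⟩
    -- kernel analysis
    have h0A : yA p q r v ((p-1)+1) = 0 := by simp [yA]
    have h0B : yB p q r v ((q-1)+1) = 0 := by simp [yB]
    have h0C : yC p q r v ((r-1)+1) = 0 := by simp [yC]
    have recA : ∀ k, k < p-1 → yA p q r v k - 2 * yA p q r v (k+1) + yA p q r v (k+2) = 0 := by
      intro k hk
      rw [show yA p q r v k - 2 * yA p q r v (k+1) + yA p q r v (k+2)
        = (MQ p q r).mulVec v (some (Sum.inl ⟨k, hk⟩)) from (mulVec_legA p q r v ⟨k, hk⟩).symm]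
      exact congrFun hker _
    have recB : ∀ k, k < q-1 → yB p q r v k - 2 * yB p q r v (k+1) + yB p q r v (k+2) = 0 := by
      intro k hk
      rw [show yB p q r v k - 2 * yB p q r v (k+1) + yB p q r v (k+2)
        = (MQ p q r).mulVec v (some (Sum.inr (Sum.inl ⟨k, hk⟩))) from (mulVec_legB p q r v ⟨k, hk⟩).symm]
      exact congrFun hker _
    have recC : ∀ k, k < r-1 → yC p q r v k - 2 * yC p q r v (k+1) + yC p q r v (k+2) = 0 := by
      intro k hk
      rw [show yC p q r v k - 2 * yC p q r v (k+1) + yC p q r v (k+2)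
        = (MQ p q r).mulVec v (some (Sum.inr (Sum.inr ⟨k, hk⟩))) from (mulVec_legC p q r v ⟨k, hk⟩).symm]
      exact congrFun hker _
    have linA := leg_lin (p-1) _ h0A recA
    have linB := leg_lin (q-1) _ h0B recB
    have linC := leg_lin (r-1) _ h0C recC
    have eA : v none = (p : ℚ) * yA p q r v (p-1) := by
      have := linA ((p-1)+1) le_rfl
      rw [Nat.sub_self] at this
      rw [show yA p q r v 0 = v none from rfl] at this
      rw [this, Nat.cast_add, Nat.cast_sub (by omega : 1 ≤ p)]
      push_cast; ring
    have eB : v none = (q : ℚ) * yB p q r v (q-1) := by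
      have := linB ((q-1)+1) le_rfl
      rw [Nat.sub_self] at this
      rw [show yB p q r v 0 = v none from rfl] at this
      rw [this, Nat.cast_add, Nat.cast_sub (by omega : 1 ≤ q)]
      push_cast; ring
    have eC : v none = (r : ℚ) * yC p q r v (r-1) := by
      have := linC ((r-1)+1) le_rfl
      rw [Nat.sub_self] at this
      rw [show yC p q r v 0 = v none from rfl] at this
      rw [this, Nat.cast_add, Nat.cast_sub (by omega : 1 ≤ r)]
      push_cast; ring
    have h1A : yA p q r v 1 = ((p : ℚ) - 1) * yA p q r v (p-1) := by
      have := linA (p-1) (by omega)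
      rw [show (p-1)+1-(p-1) = 1 by omega] at this
      rw [this, Nat.cast_sub (by omega : 1 ≤ p)]
      push_cast; ring
    have h1B : yB p q r v 1 = ((q : ℚ) - 1) * yB p q r v (q-1) := by
      have := linB (q-1) (by omega)
      rw [show (q-1)+1-(q-1) = 1 by omega] at this
      rw [this, Nat.cast_sub (by omega : 1 ≤ q)]
      push_cast; ring
    have h1C : yC p q r v 1 = ((r : ℚ) - 1) * yC p q r v (r-1) := by
      have := linC (r-1) (by omega)
      rw [show (r-1)+1-(r-1) = 1 by omega] at this
      rw [this, Nat.cast_sub (by omega : 1 ≤ r)]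
      push_cast; ring
    have hc : -2 * v none + (yA p q r v 1 + (yB p q r v 1 + yC p q r v 1)) = 0 := by
      rw [← mulVec_none]
      exact congrFun hker none
    rw [h1A, h1B, h1C] at hc
    have key : v none * ((p : ℚ) * q * r - ((p : ℚ) * q + (p : ℚ) * r + (q : ℚ) * r)) = 0 := by
      linear_combination ((p : ℚ) * q * r) * hc + (((p : ℚ) - 1) * q * r) * eA
        + ((p : ℚ) * ((q : ℚ) - 1) * r) * eB + ((p : ℚ) * q * ((r : ℚ) - 1)) * eC
    by_cases hX0 : v none = 0
    · exfalso
      apply hv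
      have tA0 : yA p q r v (p-1) = 0 := by
        have := eA; rw [hX0] at this
        field_simp at this
        exact (mul_eq_zero.mp this.symm).resolve_left hp0
      have tB0 : yB p q r v (q-1) = 0 := by
        have := eB; rw [hX0] at this
        field_simp at this
        exact (mul_eq_zero.mp this.symm).resolve_left hq0
      have tC0 : yC p q r v (r-1) = 0 := by
        have := eC; rw [hX0] at this
        field_simp at this
        exact (mul_eq_zero.mp this.symm).resolve_left hr0
      funext w
      match w with
      | none => exact hX0
      | some (Sum.inl k) =>
        have hk := k.isLt
        have := linA ((p-1) - k.val) (by omega)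
        rw [show (p-1)+1-((p-1)-k.val) = k.val+1 by omega] at this
        have hy : yA p q r v (k.val+1) = v (some (Sum.inl k)) := by
          simp [yA, k.isLt]
        rw [hy, tA0, mul_zero] at this
        exact this
      | some (Sum.inr (Sum.inl k)) =>
        have hk := k.isLt
        have := linB ((q-1) - k.val) (by omega)
        rw [show (q-1)+1-((q-1)-k.val) = k.val+1 by omega] at this
        have hy : yB p q r v (k.val+1) = v (some (Sum.inr (Sum.inl k))) := by
          simp [yB, k.isLt]
        rw [hy, tB0, mul_zero] at this
        exact this
      | some (Sum.inr (Sum.inr k)) =>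
        have hk := k.isLt
        have := linC ((r-1) - k.val) (by omega)
        rw [show (r-1)+1-((r-1)-k.val) = k.val+1 by omega] at this
        have hy : yC p q r v (k.val+1) = v (some (Sum.inr (Sum.inr k))) := by
          simp [yC, k.isLt]
        rw [hy, tC0, mul_zero] at this
        exact this
    · have := (mul_eq_zero.mp key).resolve_left hX0
      linarith [this]
  · intro heq
    -- construct an explicit kernel vector
    refine ⟨fun w => match w with
      | none => 1
      | some (Sum.inl i) => ((p : ℚ) - 1 - i) / p
      | some (Sum.inr (Sum.inl i)) => ((q : ℚ) - 1 - i) / q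
      | some (Sum.inr (Sum.inr i)) => ((r : ℚ) - 1 - i) / r, ?_, ?_⟩
    · intro h0
      simpa using congrFun h0 none
    · set v : TVertex p q r → ℚ := fun w => match w with
        | none => 1
        | some (Sum.inl i) => ((p : ℚ) - 1 - i) / p
        | some (Sum.inr (Sum.inl i)) => ((q : ℚ) - 1 - i) / q
        | some (Sum.inr (Sum.inr i)) => ((r : ℚ) - 1 - i) / r with hvdef
      have hyA : ∀ j, j ≤ (p-1)+1 → yA p q r v j = ((p : ℚ) - j) / p := by
        intro j hj
        match j with
        | 0 => simp [yA, hvdef]; field_simp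
        | (j+1) =>
          rw [show yA p q r v (j+1)
            = if h : j < p - 1 then v (some (Sum.inl ⟨j, h⟩)) else 0 from rfl]
          split_ifs with h
          · simp only [hvdef]
            push_cast
            ring
          · have : j = p - 1 := by omega
            subst this
            rw [Nat.cast_add, Nat.cast_sub (by omega : 1 ≤ p)]
            push_cast
            ring_nf
      have hyB : ∀ j, j ≤ (q-1)+1 → yB p q r v j = ((q : ℚ) - j) / q := by
        intro j hj
        match j with
        | 0 => simp [yB, hvdef]; field_simp
        | (j+1) =>
          rw [show yB p q r v (j+1)
            = if h : j < q - 1 then v (some (Sum.inr (Sum.inl ⟨j, h⟩))) else 0 from rfl]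
          split_ifs with h
          · simp only [hvdef]
            push_cast
            ring
          · have : j = q - 1 := by omega
            subst this
            rw [Nat.cast_add, Nat.cast_sub (by omega : 1 ≤ q)]
            push_cast
            ring_nf
      have hyC : ∀ j, j ≤ (r-1)+1 → yC p q r v j = ((r : ℚ) - j) / r := by
        intro j hj
        match j with
        | 0 => simp [yC, hvdef]; field_simp
        | (j+1) =>
          rw [show yC p q r v (j+1)
            = if h : j < r - 1 then v (some (Sum.inr (Sum.inr ⟨j, h⟩))) else 0 from rfl]
          split_ifs with h
          · simp only [hvdef]
            push_cast
            ring
          · have : j = r - 1 := by omega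
            subst this
            rw [Nat.cast_add, Nat.cast_sub (by omega : 1 ≤ r)]
            push_cast
            ring_nf
      funext w
      match w with
      | none =>
        rw [show ((0 : TVertex p q r → ℚ)) none = 0 from rfl]
        rw [mulVec_none, hyA 1 (by omega), hyB 1 (by omega), hyC 1 (by omega)]
        rw [show v none = 1 from rfl]
        push_cast
        field_simp
        linear_combination heq
      | some (Sum.inl k) =>
        have hk := k.isLt
        rw [show ((0 : TVertex p q r → ℚ)) (some (Sum.inl k)) = 0 from rfl]
        rw [mulVec_legA, hyA k.val (by omega), hyA (k.val+1) (by omega), hyA (k.val+2) (by omega)]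
        push_cast
        field_simp
        ring
      | some (Sum.inr (Sum.inl k)) =>
        have hk := k.isLt
        rw [show ((0 : TVertex p q r → ℚ)) (some (Sum.inr (Sum.inl k))) = 0 from rfl]
        rw [mulVec_legB, hyB k.val (by omega), hyB (k.val+1) (by omega), hyB (k.val+2) (by omega)]
        push_cast
        field_simp
        ring
      | some (Sum.inr (Sum.inr k)) =>
        have hk := k.isLt
        rw [show ((0 : TVertex p q r → ℚ)) (some (Sum.inr (Sum.inr k))) = 0 from rfl]
        rw [mulVec_legC, hyC k.val (by omega), hyC (k.val+1) (by omega), hyC (k.val+2) (by omega)]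
        push_cast
        field_simp
        ring
end

section
/- Let n ≥ 1, let p = (p_1,…,p_n) be an n-tuple of positive integers, let ι = (i_1,…,i_n) be an n-tuple of integers with 1 ≤ i_j ≤ ⌈p_j/2⌉ for each j, and let k ≥ −4 be an even integer. Let G be the Gram matrix of the lattice M_{p,ι,k} (a square matrix of size 1 + p_1 + ⋯ + p_n). Then det G = (−1)^{p_1+⋯+p_n} · ( k·∏_{j=1}^n (p_j+1) + Σ_{j=1}^n i_j (p_j+1−i_j) ∏_{l≠j} (p_l+1) ); equivalently, det G = (−1)^{p_1+⋯+p_n} (p_1+1)⋯(p_n+1) ( k + Σ_{j=1}^n i_j(p_j+1−i_j)/(p_j+1) ). (This is Dolgachev's discriminant formula for M_{p,ι,k}, up to the paper's sign convention for the discriminant.) -/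
/-- The vertex set of the `M_{p,ι,k}` graph: a central vertex (`none`) together
with, for each `j : Fin n`, a path (`A_{p j}` Dynkin diagram) of `p j` vertices.
Its cardinality is `1 + p 1 + ⋯ + p n`. -/
abbrev MVertex (n : ℕ) (p : Fin n → ℕ) := Option ((j : Fin n) × Fin (p j))

/-- Adjacency in the `M_{p,ι,k}` graph: consecutive vertices of each path are
adjacent, and the central vertex is adjacent to the `ι j`-th vertex (1-based)
of the `j`-th path. -/
def MAdj {n : ℕ} {p : Fin n → ℕ} (ι : Fin n → ℕ) :
    MVertex n p → MVertex n p → Bool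
  | none, none => false
  | none, some ⟨j, i⟩ => i.val + 1 == ι j
  | some ⟨j, i⟩, none => i.val + 1 == ι j
  | some ⟨j, i⟩, some ⟨l, i'⟩ =>
      decide (j = l) && ((i.val + 1 == i'.val) || (i'.val + 1 == i.val))

/-- The Gram matrix of the `M_{p,ι,k}` lattice: the central vertex is labelled `k`,
every other vertex is labelled `-2`, with off-diagonal entry `1` for adjacent
vertices and `0` otherwise. -/
def MGram (n : ℕ) (p : Fin n → ℕ) (ι : Fin n → ℕ) (k : ℤ) :
    Matrix (MVertex n p) (MVertex n p) ℤ :=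
  Matrix.of fun v w =>
    if v = w then (match v with | none => k | some _ => -2)
    else if MAdj ι v w then 1 else 0

/-! ### Auxiliary machinery -/

open Matrix Finset

/-- The negative Cartan matrix of type `A_m` (tridiagonal, `-2` on the diagonal). -/
def Amat (m : ℕ) : Matrix (Fin m) (Fin m) ℚ :=
  Matrix.of fun i j =>
    if i = j then -2 else if i.val + 1 = j.val ∨ j.val + 1 = i.val then 1 else 0

lemma Amat_succ_succ (m : ℕ) :
    (Amat (m+1)).submatrix Fin.succ Fin.succ = Amat m := by
  ext i j
  simp only [Amat, Matrix.submatrix_apply, Matrix.of_apply, Fin.succ_inj, Fin.val_succ]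
  rcases eq_or_ne i j with h | h
  · simp [h]
  · rw [if_neg h, if_neg h]
    have : (i.val + 1 + 1 = j.val + 1 ∨ j.val + 1 + 1 = i.val + 1) ↔
        (i.val + 1 = j.val ∨ j.val + 1 = i.val) := by omega
    simp [this]

lemma M1_eq (m : ℕ) :
    ((Amat (m+2)).submatrix Fin.succ (Fin.succAbove 1)).submatrix Fin.succ Fin.succ = Amat m := by
  ext i j
  have h1 : ((1 : Fin (m+2)).succAbove j.succ).val = j.val + 2 := by
    rw [Fin.succAbove_of_le_castSucc]
    · simp
    · rw [Fin.le_def]; simp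
  simp only [Amat, Matrix.submatrix_apply, Matrix.of_apply]
  have e1 : (i.succ.succ = (1 : Fin (m+2)).succAbove j.succ) ↔ i = j := by
    rw [Fin.ext_iff, Fin.ext_iff, h1]; simp only [Fin.val_succ]; omega
  have e2 : (i.succ.succ.val + 1 = ((1 : Fin (m+2)).succAbove j.succ).val ∨
      ((1 : Fin (m+2)).succAbove j.succ).val + 1 = i.succ.succ.val) ↔
      (i.val + 1 = j.val ∨ j.val + 1 = i.val) := by
    rw [h1]; simp only [Fin.val_succ]; omega
  simp only [e1, e2]

lemma M1_col (m : ℕ) (i : Fin (m+1)) :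
    (Amat (m+2)).submatrix Fin.succ (Fin.succAbove 1) i 0 = if i = 0 then 1 else 0 := by
  have h0 : ((1 : Fin (m+2)).succAbove 0).val = 0 := rfl
  simp only [Amat, Matrix.submatrix_apply, Matrix.of_apply]
  have e1 : (i.succ = (1 : Fin (m+2)).succAbove 0) ↔ False := by
    rw [iff_false, Fin.ext_iff, h0, Fin.val_succ]; omega
  have e2 : (i.succ.val + 1 = ((1:Fin (m+2)).succAbove 0).val ∨
      ((1:Fin (m+2)).succAbove 0).val + 1 = i.succ.val) ↔ (i = 0) := by
    rw [h0, Fin.ext_iff]; simp only [Fin.val_succ, Fin.val_zero]; omega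
  simp only [e1, e2]
  simp

lemma M1_det (m : ℕ) :
    ((Amat (m+2)).submatrix Fin.succ (Fin.succAbove 1)).det = (Amat m).det := by
  rw [Matrix.det_succ_column_zero, Fin.sum_univ_succ]
  simp only [M1_col]
  rw [Finset.sum_eq_zero (fun x _ => by
    simp [Fin.succ_ne_zero])]
  simp only [if_pos rfl, Fin.succAbove_zero, M1_eq]
  simp

lemma Amat_det (m : ℕ) : (Amat m).det = (-1)^m * (m+1) := by
  induction m using Nat.strong_induction_on with
  | _ m ih =>
    match m with
    | 0 => simp [Matrix.det_fin_zero]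
    | 1 =>
      rw [Matrix.det_fin_one]
      norm_num [Amat]
    | (m+2) =>
      have hA00 : Amat (m+2) 0 0 = -2 := by simp [Amat]
      have hA01 : Amat (m+2) 0 ((0 : Fin (m+1)).succ) = 1 := by
        simp [Amat, Fin.ext_iff]
      have hA0s : ∀ x : Fin m, Amat (m+2) 0 x.succ.succ = 0 := by
        intro x
        simp only [Amat, Matrix.of_apply]
        rw [if_neg (by simp [Fin.ext_iff]), if_neg (by simp only [Fin.val_zero, Fin.val_succ]; omega)]
      rw [Matrix.det_succ_row_zero, Fin.sum_univ_succ, Fin.sum_univ_succ]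
      rw [Finset.sum_eq_zero (fun x _ => by rw [hA0s x]; ring_nf)]
      rw [hA00, hA01, Fin.succAbove_zero, Amat_succ_succ, Fin.succ_zero_eq_one, M1_det]
      rw [ih (m+1) (by omega), ih m (by omega)]
      simp only [Fin.val_zero, Fin.val_succ, Fin.val_one, pow_succ, pow_zero, pow_one]
      push_cast
      ring

def gfun (m a b : ℤ) : ℤ := (min (a+1) (b+1)) * (m - max a b)

lemma gfun_key {m a b : ℤ} (ha : 0 ≤ a) (ham : a ≤ m - 1) (hb : 0 ≤ b) (hbm : b ≤ m - 1) :
    gfun m (a-1) b + gfun m (a+1) b - 2 * gfun m a b = if a = b then -(m+1) else 0 := by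
  unfold gfun
  rcases lt_trichotomy a b with h | h | h
  · rw [if_neg h.ne]
    rw [min_eq_left (by omega), min_eq_left (by omega), min_eq_left (by omega),
        max_eq_right (by omega), max_eq_right (by omega), max_eq_right (by omega)]
    ring
  · subst h
    rw [if_pos rfl]
    rw [min_eq_left (by omega), min_eq_right (by omega), min_eq_left (by omega),
        max_eq_right (by omega), max_eq_left (by omega), max_eq_left (by omega)]
    ring
  · rw [if_neg h.ne']
    rw [min_eq_right (by omega), min_eq_right (by omega), min_eq_right (by omega),
        max_eq_left (by omega), max_eq_left (by omega), max_eq_left (by omega)]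
    ring

/-- The entries of the inverse of `Amat`, as a function of integer indices. -/
noncomputable def nent (m : ℕ) (a b : ℤ) : ℚ := -(gfun m a b : ℚ) / (m + 1)

/-- The inverse of `Amat`. -/
noncomputable def Nmat (m : ℕ) : Matrix (Fin m) (Fin m) ℚ :=
  Matrix.of fun i j => nent m i.val j.val

lemma nent_left (m : ℕ) (b : ℤ) (hb : 0 ≤ b) : nent m (-1) b = 0 := by
  unfold nent gfun
  rw [min_eq_left (by omega)]
  norm_num

lemma nent_right (m : ℕ) (b : ℤ) (hb : b ≤ m - 1) : nent m m b = 0 := by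
  unfold nent gfun
  rw [max_eq_left (by omega)]
  norm_num

lemma sum_fin_eq {m c : ℕ} (f : Fin m → ℚ) :
    (∑ x : Fin m, if x.val = c then f x else 0) = if h : c < m then f ⟨c, h⟩ else 0 := by
  by_cases h : c < m
  · rw [dif_pos h]
    rw [Finset.sum_eq_single ⟨c, h⟩]
    · simp
    · intro x _ hx
      rw [if_neg (fun hc => hx (Fin.ext hc))]
    · intro h'; exact absurd (Finset.mem_univ _) h'
  · rw [dif_neg h]
    exact Finset.sum_eq_zero fun x _ => if_neg (by omega)

lemma Amat_mul_Nmat (m : ℕ) : Amat m * Nmat m = 1 := by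
  ext i j
  rw [Matrix.mul_apply]
  have expand : ∀ x : Fin m, Amat m i x * Nmat m x j =
      (if x = i then -2 * Nmat m i j else 0) +
      ((if x.val = i.val + 1 then nent m x.val j.val else 0) +
       (if x.val = i.val - 1 ∧ 1 ≤ i.val then nent m x.val j.val else 0)) := by
    intro x
    simp only [Amat, Nmat, Matrix.of_apply]
    rcases eq_or_ne x i with rfl | hx
    · rw [if_pos rfl, if_pos rfl, if_neg (by omega), if_neg (by omega)]; ring
    · rw [if_neg (fun h => hx (Fin.ext (Fin.ext_iff.mp h).symm)), if_neg hx]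
      by_cases h1 : i.val + 1 = x.val
      · rw [if_pos (Or.inl h1), if_pos h1.symm, if_neg (by omega)]; ring
      · by_cases h2 : x.val + 1 = i.val
        · rw [if_pos (Or.inr h2), if_neg (by omega), if_pos (by omega)]; ring
        · rw [if_neg (by tauto), if_neg (by omega), if_neg (by omega)]; ring
  rw [Finset.sum_congr rfl (fun x _ => expand x), Finset.sum_add_distrib,
      Finset.sum_add_distrib, Finset.sum_ite_eq' Finset.univ i, if_pos (Finset.mem_univ i)]
  rw [sum_fin_eq (fun x => nent m x.val j.val)]
  have hsplit : (∑ x : Fin m, if x.val = i.val - 1 ∧ 1 ≤ i.val then nent m x.val j.val else 0)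
      = nent m ((i.val : ℤ) - 1) j.val := by
    by_cases hi : 1 ≤ i.val
    · have hc : ∀ x : Fin m, (if x.val = i.val - 1 ∧ 1 ≤ i.val then nent m x.val j.val else 0)
          = (if x.val = i.val - 1 then nent m x.val j.val else 0) := fun x => by simp [hi]
      rw [Finset.sum_congr rfl (fun x _ => hc x)]
      rw [sum_fin_eq (fun x => nent m x.val j.val), dif_pos (by omega)]
      show nent m ((i.val - 1 : ℕ) : ℤ) j.val = _
      rw [show (((i.val - 1 : ℕ)) : ℤ) = (i.val : ℤ) - 1 by omega]
    · rw [Finset.sum_eq_zero (fun x _ => by rw [if_neg]; omega)]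
      rw [show ((i.val : ℤ) - 1) = -1 by omega, nent_left m j.val (by omega)]
  rw [hsplit]
  have h2 : (if h : i.val + 1 < m then nent m (i.val+1 : ℕ) j.val else 0)
      = nent m ((i.val : ℤ) + 1) j.val := by
    by_cases h : i.val + 1 < m
    · rw [dif_pos h]; norm_num
    · rw [dif_neg h]
      rw [show ((i.val : ℤ) + 1) = (m : ℤ) by have := i.isLt; omega,
          nent_right m j.val (by have := j.isLt; omega)]
  rw [h2]
  have key := gfun_key (m := m) (a := i.val) (b := j.val) (by omega)
    (by have := i.isLt; omega) (by omega) (by have := j.isLt; omega)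
  have hm : ((m : ℚ) + 1) ≠ 0 := by positivity
  simp only [Nmat, Matrix.of_apply, nent, Matrix.one_apply, Fin.ext_iff]
  by_cases hij : i.val = j.val
  · rw [if_pos hij]
    have k2 : (gfun m ((i.val:ℤ) - 1) j.val) + gfun m ((i.val:ℤ) + 1) j.val
        - 2 * gfun m i.val j.val = -((m:ℤ)+1) := by rw [key, if_pos (by omega)]
    have k3 : ((gfun m ((i.val:ℤ) - 1) j.val : ℤ) : ℚ) + ((gfun m ((i.val:ℤ) + 1) j.val : ℤ) : ℚ)
        - 2*((gfun m (i.val:ℤ) (j.val:ℤ) : ℤ):ℚ) = -((m:ℚ)+1) := by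
      have := congrArg (fun z : ℤ => (z : ℚ)) k2
      push_cast at this
      convert this using 2 <;> push_cast <;> ring
    rw [show (-2 * (-(gfun m (i.val:ℤ) (j.val:ℤ) : ℚ)/((m:ℚ)+1))) =
        (2*(gfun m (i.val:ℤ) (j.val:ℤ) : ℚ))/((m:ℚ)+1) from by ring,
       ← add_div, ← add_div, div_eq_iff hm]
    linarith [k3]
  · rw [if_neg hij]
    have k2 : (gfun m ((i.val:ℤ) - 1) j.val) + gfun m ((i.val:ℤ) + 1) j.val
        - 2 * gfun m i.val j.val = 0 := by rw [key, if_neg (by omega)]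
    have k3 : ((gfun m ((i.val:ℤ) - 1) j.val : ℤ) : ℚ) + ((gfun m ((i.val:ℤ) + 1) j.val : ℤ) : ℚ)
        - 2*((gfun m (i.val:ℤ) (j.val:ℤ) : ℤ):ℚ) = 0 := by
      have := congrArg (fun z : ℤ => (z : ℚ)) k2
      push_cast at this
      convert this using 2 <;> push_cast <;> ring
    rw [show (-2 * (-(gfun m (i.val:ℤ) (j.val:ℤ) : ℚ)/((m:ℚ)+1))) =
        (2*(gfun m (i.val:ℤ) (j.val:ℤ) : ℚ))/((m:ℚ)+1) from by ring,
       ← add_div, ← add_div, div_eq_iff hm]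
    linarith [k3]

lemma det_blockDiagonal'_fin {n : ℕ} {p : Fin n → ℕ}
    (d : ∀ j, Matrix (Fin (p j)) (Fin (p j)) ℚ) :
    (Matrix.blockDiagonal' d).det = ∏ j, (d j).det := by
  rw [(Matrix.blockTriangular_blockDiagonal' d).det_fintype]
  refine Finset.prod_congr rfl fun j _ => ?_
  let e : Fin (p j) ≃ {a : Σ l : Fin n, Fin (p l) // a.1 = j} :=
    { toFun := fun i => ⟨⟨j, i⟩, rfl⟩
      invFun := fun a => (congrArg (fun l => Fin (p l)) a.2).mp a.1.2
      left_inv := fun i => rfl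
      right_inv := by rintro ⟨⟨l, i⟩, rfl⟩; rfl }
  rw [← Matrix.det_submatrix_equiv_self e]
  congr 1
  ext i i'
  simp [Matrix.toSquareBlock_def, e]

/-- Reindexing of `MVertex` as a sum type. -/
def vEquiv (n : ℕ) (p : Fin n → ℕ) : (Unit ⊕ (Σ j : Fin n, Fin (p j))) ≃ MVertex n p where
  toFun x := match x with | Sum.inl _ => none | Sum.inr s => some s
  invFun v := match v with | none => Sum.inl () | some s => Sum.inr s
  left_inv := by rintro (⟨⟩ | s) <;> rfl
  right_inv := by rintro (_ | s) <;> rfl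

lemma MGram_reindex (n : ℕ) (p ι : Fin n → ℕ) (k : ℤ) :
    ((MGram n p ι k).map (Int.cast : ℤ → ℚ)).submatrix (vEquiv n p) (vEquiv n p) =
    Matrix.fromBlocks (Matrix.of fun _ _ => (k : ℚ))
      (Matrix.of fun (_ : Unit) (s : Σ j, Fin (p j)) => if s.2.val + 1 = ι s.1 then 1 else 0)
      (Matrix.of fun (s : Σ j, Fin (p j)) (_ : Unit) => if s.2.val + 1 = ι s.1 then 1 else 0)
      (Matrix.blockDiagonal' (fun j => Amat (p j))) := by
  ext x y
  rcases x with _ | ⟨j, i⟩ <;> rcases y with _ | ⟨l, i'⟩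
  · simp [MGram, vEquiv]
  · simp [MGram, MAdj, vEquiv, apply_ite (Int.cast : ℤ → ℚ)]
  · simp [MGram, MAdj, vEquiv, apply_ite (Int.cast : ℤ → ℚ)]
  · show ((MGram n p ι k) (some ⟨j, i⟩) (some ⟨l, i'⟩) : ℚ) =
      Matrix.blockDiagonal' (fun j => Amat (p j)) ⟨j, i⟩ ⟨l, i'⟩
    by_cases hjl : j = l
    · subst hjl
      rw [Matrix.blockDiagonal'_apply_eq]
      simp only [MGram, MAdj, Matrix.of_apply, Amat, Option.some.injEq, Sigma.mk.inj_iff,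
        heq_eq_eq, true_and, decide_eq_true_eq, if_pos rfl, decide_true, Bool.true_and]
      rcases eq_or_ne i i' with rfl | hii
      · simp
      · rw [if_neg (by simpa using hii), if_neg hii]
        by_cases hadj : i.val + 1 = i'.val ∨ i'.val + 1 = i.val
        · rw [if_pos (by simpa using hadj), if_pos hadj]; norm_num
        · rw [if_neg (by simpa using hadj), if_neg hadj]; norm_num
    · rw [Matrix.blockDiagonal'_apply_ne _ _ _ hjl]
      simp only [MGram, MAdj, Matrix.of_apply]
      simp [hjl]

def Bmat (n : ℕ) (p ι : Fin n → ℕ) : Matrix Unit ((j : Fin n) × Fin (p j)) ℚ :=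
  Matrix.of fun _ s => if s.2.val + 1 = ι s.1 then 1 else 0

def Cmat (n : ℕ) (p ι : Fin n → ℕ) : Matrix ((j : Fin n) × Fin (p j)) Unit ℚ :=
  Matrix.of fun s _ => if s.2.val + 1 = ι s.1 then 1 else 0

def Kmat (k : ℤ) : Matrix Unit Unit ℚ := Matrix.of fun _ _ => (k : ℚ)

noncomputable def Dmat (n : ℕ) (p : Fin n → ℕ) :
    Matrix ((j : Fin n) × Fin (p j)) ((j : Fin n) × Fin (p j)) ℚ :=
  Matrix.blockDiagonal' (fun j => Amat (p j))

noncomputable def NmatB (n : ℕ) (p : Fin n → ℕ) :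
    Matrix ((j : Fin n) × Fin (p j)) ((j : Fin n) × Fin (p j)) ℚ :=
  Matrix.blockDiagonal' (fun j => Nmat (p j))

lemma Dmat_mul (n : ℕ) (p : Fin n → ℕ) : Dmat n p * NmatB n p = 1 := by
  unfold Dmat NmatB
  rw [← Matrix.blockDiagonal'_mul]
  rw [show (fun j => Amat (p j) * Nmat (p j)) = fun j => (1 : Matrix (Fin (p j)) (Fin (p j)) ℚ)
    from funext fun j => Amat_mul_Nmat (p j)]
  exact Matrix.blockDiagonal'_one

lemma Dmat_det (n : ℕ) (p : Fin n → ℕ) :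
    (Dmat n p).det = (-1) ^ (∑ j, p j) * ∏ j, ((p j : ℚ) + 1) := by
  unfold Dmat
  rw [det_blockDiagonal'_fin]
  simp_rw [Amat_det]
  rw [Finset.prod_mul_distrib, Finset.prod_pow_eq_pow_sum]

lemma MGram_reindex' (n : ℕ) (p ι : Fin n → ℕ) (k : ℤ) :
    ((MGram n p ι k).map (Int.cast : ℤ → ℚ)).submatrix (vEquiv n p) (vEquiv n p) =
    Matrix.fromBlocks (Kmat k) (Bmat n p ι) (Cmat n p ι) (Dmat n p) :=
  MGram_reindex n p ι k

/-- Dolgachev's discriminant formula for `M_{p,ι,k}`: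
`det G = (-1)^(p₁+⋯+pₙ) * (k·∏ⱼ(pⱼ+1) + Σⱼ iⱼ(pⱼ+1-iⱼ)·∏_{l≠j}(p_l+1))`. -/
theorem MGram_det (n : ℕ) (hn : 1 ≤ n) (p ι : Fin n → ℕ)
    (hp : ∀ j, 1 ≤ p j) (hι₁ : ∀ j, 1 ≤ ι j) (hι₂ : ∀ j, ι j ≤ (p j + 1) / 2)
    (k : ℤ) (hk : -4 ≤ k) (hkeven : Even k) :
    (MGram n p ι k).det =
      (-1) ^ (∑ j, p j) *
        (k * ∏ j, ((p j : ℤ) + 1) +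
          ∑ j, (ι j : ℤ) * ((p j : ℤ) + 1 - (ι j : ℤ)) *
            ∏ l ∈ Finset.univ.erase j, ((p l : ℤ) + 1)) := by
  have hp' : ∀ j, ι j - 1 < p j := fun j => by
    have := hι₂ j; have := hι₁ j; have := hp j; omega
  have hιp : ∀ j, ι j ≤ p j := fun j => by
    have := hι₂ j; have := hp j; omega
  set iF : ∀ j, Fin (p j) := fun j => ⟨ι j - 1, hp' j⟩ with hiF
  -- invertibility of the block-diagonal part
  haveI : Invertible (Dmat n p) :=
    invertibleOfRightInverse _ _ (Dmat_mul n p)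
  have hinv : ⅟(Dmat n p) = NmatB n p := invOf_eq_right_inv (Dmat_mul n p)
  -- step 1 : determinant over ℚ via the reindexed block matrix
  have h0 : ((MGram n p ι k).det : ℚ) =
      (Matrix.fromBlocks (Kmat k) (Bmat n p ι) (Cmat n p ι) (Dmat n p)).det := by
    rw [← MGram_reindex' n p ι k, Matrix.det_submatrix_equiv_self]
    exact (RingHom.map_det (Int.castRingHom ℚ) (MGram n p ι k))
  -- step 2 : Schur complement
  have h1 : (Matrix.fromBlocks (Kmat k) (Bmat n p ι) (Cmat n p ι) (Dmat n p)).det =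
      (Dmat n p).det * (Kmat k - Bmat n p ι * ⅟(Dmat n p) * Cmat n p ι).det :=
    Matrix.det_fromBlocks₂₂ _ _ _ _
  -- indicator description of B and C
  have hcond : ∀ s : (Σ j : Fin n, Fin (p j)), (s.2.val + 1 = ι s.1) ↔ (s.2 = iF s.1) := by
    intro s
    rw [Fin.ext_iff, hiF]
    show s.2.val + 1 = ι s.1 ↔ s.2.val = ι s.1 - 1
    have := hι₁ s.1; omega
  have hBs : ∀ s, Bmat n p ι () s = (if s.2 = iF s.1 then (1:ℚ) else 0) := fun s => by
    simp only [Bmat, Matrix.of_apply]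
    exact if_congr (hcond s) rfl rfl
  have hCs : ∀ s, Cmat n p ι s () = (if s.2 = iF s.1 then (1:ℚ) else 0) := fun s => by
    simp only [Cmat, Matrix.of_apply]
    exact if_congr (hcond s) rfl rfl
  have hsum : ∀ f : (Σ j : Fin n, Fin (p j)) → ℚ,
      (∑ s, (if s.2 = iF s.1 then (1:ℚ) else 0) * f s) = ∑ j, f ⟨j, iF j⟩ := by
    intro f
    rw [← Finset.univ_sigma_univ, Finset.sum_sigma]
    refine Finset.sum_congr rfl fun j _ => ?_
    simp [ite_mul, Finset.sum_ite_eq']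
  -- the Schur complement entry
  have hBNC : (Bmat n p ι * NmatB n p * Cmat n p ι) () () =
      ∑ j, Nmat (p j) (iF j) (iF j) := by
    rw [Matrix.mul_apply]
    have step1 : ∀ t, (Bmat n p ι * NmatB n p) () t = ∑ j, NmatB n p ⟨j, iF j⟩ t := by
      intro t
      rw [Matrix.mul_apply]
      rw [Finset.sum_congr rfl (fun s _ => by rw [hBs s])]
      exact hsum (fun s => NmatB n p s t)
    rw [Finset.sum_congr rfl (fun t _ => by rw [step1 t, hCs t, mul_comm])]
    rw [hsum (fun t => ∑ j, NmatB n p ⟨j, iF j⟩ t)]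
    refine Finset.sum_congr rfl fun l _ => ?_
    rw [Finset.sum_eq_single l]
    · exact Matrix.blockDiagonal'_apply_eq _ _ _ _
    · intro j _ hj; exact Matrix.blockDiagonal'_apply_ne _ _ _ hj
    · simp
  -- value of the diagonal inverse entries
  have hNval : ∀ j, Nmat (p j) (iF j) (iF j) =
      -((ι j : ℚ) * ((p j : ℚ) + 1 - (ι j : ℚ))) / ((p j : ℚ) + 1) := by
    intro j
    show nent (p j) ((ι j - 1 : ℕ) : ℤ) ((ι j - 1 : ℕ) : ℤ) = _
    unfold nent gfun
    rw [min_self, max_self]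
    rw [show (((ι j - 1 : ℕ)) : ℤ) = (ι j : ℤ) - 1 by have := hι₁ j; omega]
    have hne : ((p j : ℚ) + 1) ≠ 0 := by positivity
    rw [div_eq_div_iff (by positivity) hne]
    push_cast
    ring
  -- the Schur complement determinant
  have hSchur : (Kmat k - Bmat n p ι * ⅟(Dmat n p) * Cmat n p ι).det =
      (k : ℚ) + ∑ j, ((ι j : ℚ) * ((p j : ℚ) + 1 - (ι j : ℚ))) / ((p j : ℚ) + 1) := by
    rw [hinv, Matrix.det_unique, Matrix.sub_apply, hBNC]
    rw [Finset.sum_congr rfl (fun j _ => hNval j)]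
    rw [show (Kmat k default default) = (k : ℚ) from rfl]
    rw [Finset.sum_congr rfl fun j _ => neg_div ((p j : ℚ) + 1) ((ι j : ℚ) * ((p j : ℚ) + 1 - (ι j : ℚ))),
        Finset.sum_neg_distrib, sub_neg_eq_add]
  -- final algebra over ℚ
  have hPj : ∀ j : Fin n, (∏ l, ((p l : ℚ) + 1)) =
      ((p j : ℚ) + 1) * ∏ l ∈ Finset.univ.erase j, ((p l : ℚ) + 1) :=
    fun j => (Finset.mul_prod_erase Finset.univ _ (Finset.mem_univ j)).symm
  have chain : ((MGram n p ι k).det : ℚ) =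
      (-1) ^ (∑ j, p j) * ((k : ℚ) * ∏ j, ((p j : ℚ) + 1) +
        ∑ j, (ι j : ℚ) * ((p j : ℚ) + 1 - (ι j : ℚ)) *
          ∏ l ∈ Finset.univ.erase j, ((p l : ℚ) + 1)) := by
    rw [h0, h1, hSchur, Dmat_det, mul_assoc]
    congr 1
    rw [mul_add, Finset.mul_sum, mul_comm (∏ j, ((p j:ℚ)+1)) (k:ℚ)]
    congr 1
    refine Finset.sum_congr rfl fun j _ => ?_
    rw [hPj j]
    have hne : ((p j : ℚ) + 1) ≠ 0 := by positivity
    field_simp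
  have chain2 : ((MGram n p ι k).det : ℚ) =
      (((-1) ^ (∑ j, p j) *
        (k * ∏ j, ((p j : ℤ) + 1) +
          ∑ j, (ι j : ℤ) * ((p j : ℤ) + 1 - (ι j : ℤ)) *
            ∏ l ∈ Finset.univ.erase j, ((p l : ℤ) + 1)) : ℤ) : ℚ) := by
    have := chain
    push_cast at this ⊢
    exact this
  exact_mod_cast chain2
end

section
/- The lattices E_6 ⊥ E_6 ⊥ U and E_8 ⊥ A_2 ⊥ A_2 ⊥ U are isomorphic: the two 14×14 block-diagonal Gram matrices are ℤ-congruent, i.e. there exists an integer matrix P with det P = ±1 such that Pᵀ · (E_6 ⊥ E_6 ⊥ U) · P = E_8 ⊥ A_2 ⊥ A_2 ⊥ U. -/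
set_option maxRecDepth 100000


open Matrix

/-- Gram matrix of a vertex-labelled graph on `Fin n`: diagonal entry `d i` at
vertex `i`, off-diagonal entry `1` for vertices joined by an edge in the list
`E` and `0` otherwise. -/
def gramOf (n : ℕ) (d : ℕ → ℤ) (E : List (ℕ × ℕ)) : Matrix (Fin n) (Fin n) ℤ :=
  Matrix.of fun i j =>
    if i = j then d i.val
    else if (i.val, j.val) ∈ E ∨ (j.val, i.val) ∈ E then 1 else 0

/-- The block-diagonal Gram matrix `E₆ ⊥ E₆ ⊥ U`: vertices `0,…,5` and `6,…,11`
form two copies of the `E₆` Dynkin diagram (all labels `-2`), and `12, 13` span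
the hyperbolic plane `U`. -/
def E6_E6_U : Matrix (Fin 14) (Fin 14) ℤ :=
  gramOf 14 (fun i => if i ≤ 11 then -2 else 0)
    [(0,1), (1,2), (2,3), (3,4), (2,5),
     (6,7), (7,8), (8,9), (9,10), (8,11),
     (12,13)]

/-- The block-diagonal Gram matrix `E₈ ⊥ A₂ ⊥ A₂ ⊥ U`: vertices `0,…,7` form the
`E₈` Dynkin diagram, `8,9` and `10,11` two copies of `A₂` (all labels `-2`),
and `12, 13` span the hyperbolic plane `U`. -/
def E8_A2_A2_U : Matrix (Fin 14) (Fin 14) ℤ :=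
  gramOf 14 (fun i => if i ≤ 11 then -2 else 0)
    [(0,1), (1,2), (2,3), (3,4), (4,5), (5,6), (2,7),
     (8,9), (10,11),
     (12,13)]


/-- Explicit change-of-basis matrix. -/
def Pmat : Matrix (Fin 14) (Fin 14) ℤ :=
  !![-2, 2, 1, 0, 0, 0, 0, -3, -2, 3, -1, 0, -3, -2;
  2, -3, 1, 0, 0, 0, 0, 1, 1, -1, 1, 0, 1, 2;
  0, -1, 2, 0, 0, 0, 0, -2, -1, 2, 0, 0, -1, -1;
  2, -3, 1, 0, 0, 0, 0, 1, 2, -2, 2, 0, 2, 2;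
  1, -1, 0, 0, 0, 0, 0, 1, 1, -1, 1, 0, 1, 1;
  -1, 0, 1, 0, 0, 0, 0, -1, -1, 2, 0, 0, -1, -1;
  -1, 1, 0, 0, 1, -1, 0, -1, -1, 1, 0, -1, -1, -1;
  -1, 1, 0, 0, 1, -1, 0, -1, 0, 1, 0, -2, -1, -1;
  1, -1, 0, 0, 1, -2, 0, 1, 2, -1, 1, -2, 1, 1;
  0, 0, 0, 0, 1, -2, 1, 0, 1, 0, 0, -1, 0, 0;
  1, -1, 0, 0, 0, -1, 1, 1, 1, -1, 1, -1, 1, 1;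
  -2, 2, 0, 1, 0, -1, 0, -2, -1, 2, -1, -1, -2, -2;
  5, -6, 0, -1, 0, 0, 0, 6, 5, -7, 3, 0, 6, 6;
  5, -5, -1, 0, 0, 0, 0, 5, 4, -5, 3, 0, 5, 5]

/-- Inverse of `Pmat`. -/
def Qmat : Matrix (Fin 14) (Fin 14) ℤ :=
  !![0, 0, 1, -1, 2, -1, 0, 0, 0, 0, 0, 0, 0, 0;
  6, -6, 5, -5, 4, 0, 1, 2, -5, 2, -2, 5, 5, 5;
  5, -5, 5, -5, 5, 0, 1, 2, -5, 2, -2, 5, 5, 4;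
  4, -4, 4, -4, 4, 0, 1, 2, -5, 2, -2, 5, 4, 4;
  3, -3, 3, -3, 3, 0, 1, 2, -4, 2, -2, 3, 3, 3;
  2, -2, 2, -2, 2, 0, 0, 2, -3, 1, -1, 2, 2, 2;
  1, -1, 1, -1, 1, 0, 0, 1, -2, 1, 0, 1, 1, 1;
  -1, 1, 0, -1, 3, 0, 0, 0, 0, 0, 0, 0, 0, -1;
  -1, 1, -1, 1, 0, 0, -1, 0, 1, 0, 0, -1, -1, -1;
  3, -3, 2, -2, 0, 1, 0, 1, -2, 1, -1, 2, 2, 3;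
  -2, 2, -2, 2, 0, 0, 0, -1, 2, -1, 1, -2, -2, -2;
  -1, 1, -1, 1, 0, 0, 0, -1, 1, 0, 0, -1, -1, -1;
  6, -7, 5, -4, 0, 1, 1, 2, -5, 2, -2, 5, 5, 6;
  7, -6, 4, -4, 0, 1, 1, 2, -5, 2, -2, 5, 5, 6]

/-- Intermediate product `Pmatᵀ * E6_E6_U`. -/
def Rmat : Matrix (Fin 14) (Fin 14) ℤ :=
  !![6, -6, 3, -3, 0, 2, 1, 2, -5, 2, -2, 5, 5, 5;
  -7, 7, -4, 4, -1, -1, -1, -2, 5, -2, 2, -5, -5, -6;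
  -1, 1, -1, 0, 1, 0, 0, 0, 0, 0, 0, 0, -1, 0;
  0, 0, 0, 0, 0, 0, 0, 0, 1, 0, 0, -2, 0, -1;
  0, 0, 0, 0, 0, 0, -1, 0, 0, -1, 1, 1, 0, 0;
  0, 0, 0, 0, 0, 0, 1, -1, 0, 1, 0, 0, 0, 0;
  0, 0, 0, 0, 0, 0, 0, 0, 1, -1, -1, 0, 0, 0;
  7, -7, 5, -3, -1, 0, 1, 2, -5, 2, -2, 5, 5, 6;
  5, -5, 4, -4, 0, 1, 2, 1, -4, 1, -1, 4, 4, 5;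
  -7, 7, -5, 5, 0, -2, -1, -2, 5, -2, 2, -5, -5, -7;
  3, -3, 3, -3, 0, 0, 0, 1, -3, 2, -2, 3, 3, 3;
  0, 0, 0, 0, 0, 0, 0, 1, 0, -1, 1, 0, 0, 0;
  7, -6, 4, -4, 0, 1, 1, 2, -5, 2, -2, 5, 5, 6;
  6, -7, 5, -4, 0, 1, 1, 2, -5, 2, -2, 5, 5, 6]

lemma PR : Pmatᵀ * E6_E6_U = Rmat := by
  ext i j
  fin_cases i <;> fin_cases j <;> decide

lemma RP : Rmat * Pmat = E8_A2_A2_U := by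
  ext i j
  fin_cases i <;> fin_cases j <;> decide

lemma PQ : Pmat * Qmat = 1 := by
  ext i j
  fin_cases i <;> fin_cases j <;> decide

/-- `E₆ ⊥ E₆ ⊥ U ≅ E₈ ⊥ A₂ ⊥ A₂ ⊥ U`: the two Gram matrices are ℤ-congruent. -/
theorem E6_E6_U_isom :
    ∃ P : Matrix (Fin 14) (Fin 14) ℤ,
      (P.det = 1 ∨ P.det = -1) ∧ Pᵀ * E6_E6_U * P = E8_A2_A2_U := by
  refine ⟨Pmat, ?_, ?_⟩
  · exact Int.isUnit_iff.mp (Matrix.isUnit_det_of_right_inverse PQ)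
  · rw [PR, RP]
end
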